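/- Let Ω ⊂ ℝ^d be a bounded domain with Lebesgue measure, let F satisfy (A1)–(A3), let τ > 0, and let u : Ω → [0,∞) be integrable with F(u) ∈ L¹(Ω). If v̂ is a minimizer of the Fisher–Rao JKO functional G(v) = ∫_Ω F(v) dx + (2/τ) ∫_Ω (√v − √u)² dx over nonnegative measurable v with F(v) ∈ L¹(Ω), then for every bounded measurable ψ : Ω → ℝ one has ∫_Ω (√v̂ − √u) √v̂ ψ dx = −(τ/2) ∫_Ω F'(v̂) v̂ ψ dx. -/

import Mathlib

open Real Set MeasureTheory Filter

/-- Admissible class for the Fisher–Rao JKO step: nonnegative measurable densities `v`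
on `Ω` with `F(v) ∈ L¹(Ω)`. -/
def FRAdm (d : ℕ) (Ω : Set (Fin d → ℝ)) (F : ℝ → ℝ) (v : (Fin d → ℝ) → ℝ) : Prop :=
  Measurable v ∧ (∀ x, 0 ≤ v x) ∧ MeasureTheory.IntegrableOn (fun x => F (v x)) Ω

/-- The Fisher–Rao JKO functional
`G(v) = ∫_Ω F(v) dx + (2/τ) ∫_Ω (√v − √u)² dx`. -/
noncomputable def FRJKO (d : ℕ) (Ω : Set (Fin d → ℝ)) (F : ℝ → ℝ) (τ : ℝ)
    (u v : (Fin d → ℝ) → ℝ) : ℝ :=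
  (∫ x in Ω, F (v x)) + (2 / τ) * ∫ x in Ω, (Real.sqrt (v x) - Real.sqrt (u x)) ^ 2

set_option maxHeartbeats 2000000 in
/-- Euler–Lagrange equation for the Fisher–Rao JKO step: for every
bounded measurable `ψ`,
`∫_Ω (√v̂ − √u) √v̂ ψ = −(τ/2) ∫_Ω F'(v̂) v̂ ψ`. -/
theorem stmt8 (d : ℕ) (Ω : Set (Fin d → ℝ)) (hΩo : IsOpen Ω) (hΩb : Bornology.IsBounded Ω)
    (F : ℝ → ℝ) (α β r : ℝ) (hα : 0 ≤ α) (hβ : 0 < β) (hr : 1 < r)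
    (hF1 : ContDiffOn ℝ 1 F (Set.Ici 0)) (hF2 : ContDiffOn ℝ 2 F (Set.Ioi 0))
    (hF'' : ∀ s : ℝ, 0 < s → 0 < deriv (deriv F) s)
    (hFlow : ∀ s : ℝ, 0 < s → β * s ^ (r - 1) - α ≤ deriv F s)
    (hA3 : ∀ M : ℝ, 0 < M → ∀ w : (Fin d → ℝ) → ℝ, (∀ x, 0 ≤ w x) →
      IntegrableOn w Ω → IntegrableOn (fun x => F (w x)) Ω →
      IntegrableOn (fun x => deriv F (M * w x) * w x) Ω)
    (τ : ℝ) (hτ : 0 < τ)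
    (u : (Fin d → ℝ) → ℝ) (hu0 : ∀ x, 0 ≤ u x) (hum : Measurable u)
    (huI : IntegrableOn u Ω) (huF : IntegrableOn (fun x => F (u x)) Ω)
    (vhat : (Fin d → ℝ) → ℝ) (hvA : FRAdm d Ω F vhat)
    (hvmin : ∀ w, FRAdm d Ω F w → FRJKO d Ω F τ u vhat ≤ FRJKO d Ω F τ u w) :
    ∀ ψ : (Fin d → ℝ) → ℝ, Measurable ψ → (∃ B : ℝ, ∀ x, |ψ x| ≤ B) →
      (∫ x in Ω, (Real.sqrt (vhat x) - Real.sqrt (u x)) * Real.sqrt (vhat x) * ψ x)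
        = -(τ / 2) * ∫ x in Ω, deriv F (vhat x) * vhat x * ψ x := by
  obtain ⟨hvm, hv0, hvF⟩ := hvA
  intro ψ hψm hψb
  obtain ⟨B, hψB⟩ := hψb
  set v := vhat with hv
  have hB0 : 0 ≤ B := le_trans (abs_nonneg _) (hψB (fun _ => 0))
  -- measure facts
  haveI : IsFiniteMeasure (volume.restrict Ω) :=
    ⟨by rw [Measure.restrict_apply_univ]; exact hΩb.measure_lt_top⟩
  -- basic facts about F
  have Fcont : ContinuousOn F (Ici 0) := hF1.continuousOn
  have hF0c : Continuous (fun s : ℝ => F (max s 0)) :=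
    Fcont.comp_continuous (continuous_id.max continuous_const)
      (fun x => mem_Ici.2 (le_max_right _ _))
  have hFd : ∀ s : ℝ, 0 < s → HasDerivAt F (deriv F s) s := by
    intro s hs
    exact ((hF2.differentiableOn two_ne_zero).differentiableAt
      (isOpen_Ioi.mem_nhds hs)).hasDerivAt
  have hF'cont : ContinuousOn (deriv F) (Ioi 0) :=
    hF2.continuousOn_deriv_of_isOpen isOpen_Ioi one_le_two
  have hF'mono : StrictMonoOn (deriv F) (Ioi 0) := by
    apply strictMonoOn_of_deriv_pos (convex_Ioi 0) hF'cont
    intro x hx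
    rw [interior_Ioi] at hx
    exact hF'' x hx
  have hF'lb : ∀ s : ℝ, 0 < s → -α ≤ deriv F s := by
    intro s hs
    have := hFlow s hs
    have h2 : 0 ≤ β * s ^ (r - 1) :=
      mul_nonneg hβ.le (Real.rpow_nonneg hs.le _)
    linarith
  -- slope bound via MVT
  have hslope : ∀ s p q : ℝ, 0 < s → 0 < p → p < q → q ≤ 2*s →
      |F q - F p| ≤ (deriv F (2*s) + 2*α) * (q - p) := by
    intro s p q hs hp hpq hq2
    have hcont : ContinuousOn F (Icc p q) :=
      Fcont.mono (fun y hy => le_trans hp.le hy.1)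
    have hder : ∀ y ∈ Ioo p q, HasDerivAt F (deriv F y) y :=
      fun y hy => hFd y (hp.trans hy.1)
    obtain ⟨c, hc, hceq⟩ := exists_hasDerivAt_eq_slope F (deriv F) hpq hcont hder
    have hc0 : 0 < c := hp.trans hc.1
    have hc2 : c ≤ 2*s := le_of_lt (lt_of_lt_of_le hc.2 hq2)
    have h2s : (0:ℝ) < 2*s := by linarith
    have hmono : deriv F c ≤ deriv F (2*s) :=
      hF'mono.monotoneOn (mem_Ioi.2 hc0) (mem_Ioi.2 h2s) hc2
    have hlb := hF'lb c hc0
    have hlb2 := hF'lb (2*s) h2s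
    have habs : |deriv F c| ≤ deriv F (2*s) + 2*α := abs_le.2 ⟨by linarith, by linarith⟩
    have heq : F q - F p = deriv F c * (q - p) := by
      rw [hceq, div_mul_cancel₀]; exact ne_of_gt (by linarith)
    rw [heq, abs_mul, abs_of_pos (by linarith : (0:ℝ) < q - p)]
    exact mul_le_mul_of_nonneg_right habs (by linarith)
  -- MVT perturbation bound
  have hMVT : ∀ s t : ℝ, 0 ≤ s → |t| ≤ 1/2 →
      |F ((1+t)*s) - F s| ≤ |t| * (s * (deriv F (2*s) + 2*α)) := by
    intro s t hs ht
    rcases eq_or_lt_of_le hs with h | hspos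
    · simp [← h]
    rcases lt_trichotomy t 0 with htn | hteq | htp
    · have ht1 : -(1/2) ≤ t := by cases abs_le.1 ht; linarith
      have hlt : (1+t)*s < s := by nlinarith
      have hpos : 0 < (1+t)*s := by nlinarith
      have := hslope s ((1+t)*s) s hspos hpos hlt (by linarith)
      rw [abs_sub_comm]
      calc |F s - F ((1+t)*s)| ≤ (deriv F (2*s) + 2*α) * (s - (1+t)*s) := this
        _ = |t| * (s * (deriv F (2*s) + 2*α)) := by
            rw [abs_of_neg htn]; ring
    · simp [hteq]
    · have hgt : s < (1+t)*s := by nlinarith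
      have := hslope s s ((1+t)*s) hspos hspos hgt (by nlinarith [abs_le.1 ht |>.2])
      calc |F ((1+t)*s) - F s| ≤ (deriv F (2*s) + 2*α) * ((1+t)*s - s) := this
        _ = |t| * (s * (deriv F (2*s) + 2*α)) := by
            rw [abs_of_pos htp]; ring
  have hFpos2 : ∀ s : ℝ, 0 ≤ s → 0 ≤ s * (deriv F (2*s) + 2*α) := by
    intro s hs
    rcases eq_or_lt_of_le hs with h | h
    · simp [← h]
    · have := hF'lb (2*s) (by linarith)
      nlinarith
  -- integrability of v
  have hvI : IntegrableOn v Ω := by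
    set t₀ : ℝ := max 1 (((α+1)/β) ^ (1/(r-1))) with ht₀def
    have ht₀1 : (1:ℝ) ≤ t₀ := le_max_left _ _
    have ht₀pos : (0:ℝ) < t₀ := by linarith
    have hd1 : deriv F t₀ ≥ 1 := by
      have h1 := hFlow t₀ ht₀pos
      have hb : (α+1)/β ≤ t₀ ^ (r-1) := by
        have hx : ((α+1)/β) ^ (1/(r-1)) ≤ t₀ := le_max_right _ _
        have hnn : (0:ℝ) ≤ (α+1)/β := by positivity
        calc (α+1)/β = (((α+1)/β) ^ (1/(r-1))) ^ (r-1) := by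
              rw [← Real.rpow_mul hnn, one_div, inv_mul_cancel₀ (by linarith : r - 1 ≠ 0),
                Real.rpow_one]
          _ ≤ t₀ ^ (r-1) := Real.rpow_le_rpow (Real.rpow_nonneg hnn _) hx (by linarith)
      have : α + 1 ≤ β * t₀ ^ (r-1) := by
        rw [div_le_iff₀ hβ] at hb; linarith
      linarith
    have hgrow : ∀ s : ℝ, 0 ≤ s → s ≤ t₀ + |F s| + |F t₀| := by
      intro s hs
      rcases le_or_gt s t₀ with h | h
      · have := abs_nonneg (F s); have := abs_nonneg (F t₀); linarith
      · have hcont : ContinuousOn F (Icc t₀ s) :=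
          Fcont.mono (fun y hy => le_trans ht₀pos.le hy.1)
        have hder : ∀ y ∈ Ioo t₀ s, HasDerivAt F (deriv F y) y :=
          fun y hy => hFd y (ht₀pos.trans hy.1)
        obtain ⟨c, hc, hceq⟩ := exists_hasDerivAt_eq_slope F (deriv F) h hcont hder
        have hc1 : deriv F t₀ ≤ deriv F c :=
          (hF'mono (mem_Ioi.2 ht₀pos) (mem_Ioi.2 (ht₀pos.trans hc.1)) hc.1).le
        have hFs : F s - F t₀ = deriv F c * (s - t₀) := by
          rw [hceq, div_mul_cancel₀]; exact ne_of_gt (by linarith)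
        have h2 : s - t₀ ≤ F s - F t₀ := by nlinarith
        have := abs_nonneg (F s); have := abs_nonneg (F t₀)
        have h3 : F s ≤ |F s| := le_abs_self _
        have h4 : -F t₀ ≤ |F t₀| := neg_le_abs _
        linarith
    apply Integrable.mono' ((integrable_const (t₀ + |F t₀|)).add hvF.abs)
      hvm.aestronglyMeasurable
    refine Filter.Eventually.of_forall (fun x => ?_)
    rw [Real.norm_eq_abs, abs_of_nonneg (hv0 x)]
    have := hgrow (v x) (hv0 x)
    simp only [Pi.add_apply]
    linarith
  have hsqb : ∀ x, 2 * (Real.sqrt (u x) * Real.sqrt (v x)) ≤ u x + v x := by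
    intro x
    nlinarith [sq_nonneg (Real.sqrt (u x) - Real.sqrt (v x)),
      Real.sq_sqrt (hu0 x), Real.sq_sqrt (hv0 x)]
  have hvsm : Measurable (fun x => Real.sqrt (v x)) := Real.continuous_sqrt.measurable.comp hvm
  have husm : Measurable (fun x => Real.sqrt (u x)) := Real.continuous_sqrt.measurable.comp hum
  have hsqvI : IntegrableOn (fun x => (Real.sqrt (v x) - Real.sqrt (u x))^2) Ω := by
    apply Integrable.mono' ((hvI.const_mul 2).add (huI.const_mul 2))
      ((hvsm.sub husm).pow measurable_const).aestronglyMeasurable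
    refine Filter.Eventually.of_forall (fun x => ?_)
    rw [Real.norm_eq_abs, abs_of_nonneg (sq_nonneg _)]
    simp only [Pi.add_apply]
    have e : (Real.sqrt (v x) - Real.sqrt (u x))^2
        = v x + u x - 2*(Real.sqrt (u x) * Real.sqrt (v x)) := by
      rw [sub_sq, Real.sq_sqrt (hv0 x), Real.sq_sqrt (hu0 x)]; ring
    rw [Pi.sub_apply, e]
    nlinarith [Real.sqrt_nonneg (u x), Real.sqrt_nonneg (v x),
      mul_nonneg (Real.sqrt_nonneg (u x)) (Real.sqrt_nonneg (v x)), hu0 x, hv0 x]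
  have hInt2 : IntegrableOn (fun x => deriv F (2 * v x) * v x) Ω :=
    hA3 2 two_pos v hv0 hvI hvF
  have hInt1 : IntegrableOn (fun x => deriv F (v x) * v x) Ω := by
    simpa using hA3 1 one_pos v hv0 hvI hvF
  -- sqrt lipschitz-type bound
  have hsqrtlip : ∀ x : ℝ, -(1/2) ≤ x → |Real.sqrt (1+x) - 1| ≤ |x| := by
    intro x hx
    have h1 : (0:ℝ) ≤ 1 + x := by linarith
    have hs : Real.sqrt (1+x) * Real.sqrt (1+x) = 1 + x := Real.mul_self_sqrt h1
    have hmul : (Real.sqrt (1+x) - 1) * (Real.sqrt (1+x) + 1) = x := by nlinarith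
    have hge : (1:ℝ) ≤ Real.sqrt (1+x) + 1 := by nlinarith [Real.sqrt_nonneg (1+x)]
    have habs : |Real.sqrt (1+x) - 1| * (Real.sqrt (1+x) + 1) = |x| := by
      have h2 := abs_mul (Real.sqrt (1+x) - 1) (Real.sqrt (1+x) + 1)
      rw [hmul, abs_of_pos (by linarith : (0:ℝ) < Real.sqrt (1+x) + 1)] at h2
      linarith
    nlinarith [abs_nonneg (Real.sqrt (1+x) - 1)]
  -- the key one-sided variational inequality
  have key : ∀ η : (Fin d → ℝ) → ℝ, Measurable η → (∀ x, |η x| ≤ B) →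
      0 ≤ (∫ x in Ω, deriv F (v x) * v x * η x)
        + (2/τ) * ∫ x in Ω, (Real.sqrt (v x) - Real.sqrt (u x)) * Real.sqrt (v x) * η x := by
    intro η hηm hηB
    set ε₀ : ℝ := (2*(B+1))⁻¹ with hε₀def
    have hε₀pos : 0 < ε₀ := by positivity
    have hIoc : Ioc (0:ℝ) ε₀ ∈ nhdsWithin (0:ℝ) (Ioi 0) :=
      Ioc_mem_nhdsGT_of_mem ⟨le_refl 0, hε₀pos⟩
    have hsmall : ∀ ε ∈ Ioc (0:ℝ) ε₀, ∀ x, |ε * η x| ≤ 1/2 := by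
      intro ε hε x
      rw [abs_mul, abs_of_pos hε.1]
      calc ε * |η x| ≤ ε₀ * B := by
            apply mul_le_mul hε.2 (hηB x) (abs_nonneg _) hε₀pos.le
        _ ≤ 1/2 := by
            rw [hε₀def, inv_mul_le_iff₀ (by positivity)]; linarith
    have hfac : ∀ ε ∈ Ioc (0:ℝ) ε₀, ∀ x, (1:ℝ)/2 ≤ 1 + ε * η x ∧ 1 + ε * η x ≤ 3/2 := by
      intro ε hε x
      have := abs_le.1 (hsmall ε hε x)
      constructor <;> linarith [this.1, this.2]
    have hw0 : ∀ ε ∈ Ioc (0:ℝ) ε₀, ∀ x, 0 ≤ (1 + ε * η x) * v x := by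
      intro ε hε x
      exact mul_nonneg (by linarith [(hfac ε hε x).1]) (hv0 x)
    have hwm : ∀ ε : ℝ, Measurable (fun x => (1 + ε * η x) * v x) :=
      fun ε => (measurable_const.add (hηm.const_mul ε)).mul hvm
    have hwFm : ∀ ε ∈ Ioc (0:ℝ) ε₀, Measurable (fun x => F ((1 + ε * η x) * v x)) := by
      intro ε hε
      have : (fun x => F ((1 + ε * η x) * v x))
          = fun x => F (max ((1 + ε * η x) * v x) 0) := by
        funext x; rw [max_eq_left (hw0 ε hε x)]
      rw [this]
      exact hF0c.measurable.comp (hwm ε)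
    have hFvm : Measurable (fun x => F (v x)) := by
      have : (fun x => F (v x)) = fun x => F (max (v x) 0) := by
        funext x; rw [max_eq_left (hv0 x)]
      rw [this]; exact hF0c.measurable.comp hvm
    -- integrability of F ∘ w_ε
    have hwF : ∀ ε ∈ Ioc (0:ℝ) ε₀, IntegrableOn (fun x => F ((1 + ε * η x) * v x)) Ω := by
      intro ε hε
      apply Integrable.mono'
        (hvF.abs.add ((hInt2.add (hvI.const_mul (2*α))).const_mul (2⁻¹)))
        (hwFm ε hε).aestronglyMeasurable
      refine Filter.Eventually.of_forall (fun x => ?_)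
      have h := hMVT (v x) (ε * η x) (hv0 x) (hsmall ε hε x)
      have hS := hFpos2 (v x) (hv0 x)
      have h2 : |ε * η x| * (v x * (deriv F (2*v x) + 2*α))
          ≤ 2⁻¹ * (v x * (deriv F (2*v x) + 2*α)) :=
        mul_le_mul_of_nonneg_right (by simpa using hsmall ε hε x) hS
      rw [Real.norm_eq_abs]
      simp only [Pi.add_apply]
      have e : 2⁻¹ * (deriv F (2*v x) * v x + 2*α*v x)
          = 2⁻¹ * (v x * (deriv F (2*v x) + 2*α)) := by ring
      rw [e]
      calc |F ((1 + ε * η x) * v x)|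
          ≤ |F ((1 + ε * η x) * v x) - F (v x)| + |F (v x)| := by
            have := abs_sub_abs_le_abs_sub (F ((1 + ε * η x) * v x)) (F (v x))
            have := abs_add_le (F ((1 + ε * η x) * v x) - F (v x)) (F (v x))
            calc |F ((1 + ε * η x) * v x)|
                = |(F ((1 + ε * η x) * v x) - F (v x)) + F (v x)| := by ring_nf
              _ ≤ _ := abs_add_le _ _
        _ ≤ |F (v x)| + 2⁻¹ * (v x * (deriv F (2*v x) + 2*α)) := by linarith
    -- integrability of FR term for w_ε
    have hwsqI : ∀ ε ∈ Ioc (0:ℝ) ε₀,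
        IntegrableOn (fun x => (Real.sqrt ((1 + ε * η x) * v x) - Real.sqrt (u x))^2) Ω := by
      intro ε hε
      apply Integrable.mono' ((hvI.const_mul 3).add (huI.const_mul 2))
        (((Real.continuous_sqrt.measurable.comp (hwm ε)).sub
          (Real.continuous_sqrt.measurable.comp hum)).pow measurable_const).aestronglyMeasurable
      refine Filter.Eventually.of_forall (fun x => ?_)
      rw [Real.norm_eq_abs, abs_of_nonneg (sq_nonneg _)]
      simp only [Pi.add_apply]
      have h1 : (Real.sqrt ((1 + ε * η x) * v x) - Real.sqrt (u x))^2
          = (1 + ε * η x) * v x + u x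
            - 2*(Real.sqrt (u x) * Real.sqrt ((1 + ε * η x) * v x)) := by
        rw [sub_sq, Real.sq_sqrt (hw0 ε hε x), Real.sq_sqrt (hu0 x)]; ring
      simp only [Pi.sub_apply, Function.comp_apply]
      rw [h1]
      have h2 : (1 + ε * η x) * v x ≤ 3/2 * v x :=
        mul_le_mul_of_nonneg_right (hfac ε hε x).2 (hv0 x)
      nlinarith [mul_nonneg (Real.sqrt_nonneg (u x)) (Real.sqrt_nonneg ((1 + ε * η x) * v x)),
        hu0 x, hv0 x]
    -- nonnegativity of the difference quotient
    have hQpos : ∀ ε ∈ Ioc (0:ℝ) ε₀,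
        0 ≤ (∫ x in Ω, (F ((1 + ε * η x) * v x) - F (v x))/ε)
          + (2/τ) * ∫ x in Ω,
            ((Real.sqrt ((1 + ε * η x) * v x) - Real.sqrt (u x))^2
              - (Real.sqrt (v x) - Real.sqrt (u x))^2)/ε := by
      intro ε hε
      have hmin := hvmin (fun x => (1 + ε * η x) * v x) ⟨hwm ε, hw0 ε hε, hwF ε hε⟩
      simp only [FRJKO] at hmin
      rw [integral_div, integral_div,
        integral_sub (hwF ε hε) hvF, integral_sub (hwsqI ε hε) hsqvI]
      have hε' : 0 < ε := hε.1
      have e : ((∫ x in Ω, F ((1 + ε * η x) * v x)) - ∫ x in Ω, F (v x))/ε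
          + (2/τ) * ((((∫ x in Ω, (Real.sqrt ((1 + ε * η x) * v x) - Real.sqrt (u x))^2))
              - ∫ x in Ω, (Real.sqrt (v x) - Real.sqrt (u x))^2)/ε)
          = (((∫ x in Ω, F ((1 + ε * η x) * v x))
                + (2/τ) * ∫ x in Ω, (Real.sqrt ((1 + ε * η x) * v x) - Real.sqrt (u x))^2)
              - ((∫ x in Ω, F (v x))
                + (2/τ) * ∫ x in Ω, (Real.sqrt (v x) - Real.sqrt (u x))^2))/ε := by
        ring
      rw [e]
      apply div_nonneg _ hε'.le
      linarith
    -- T1 : limit of the entropy difference quotient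
    have T1 : Tendsto (fun ε : ℝ => ∫ x in Ω, (F ((1 + ε * η x) * v x) - F (v x))/ε)
        (nhdsWithin 0 (Ioi 0)) (nhds (∫ x in Ω, deriv F (v x) * v x * η x)) := by
      apply tendsto_integral_filter_of_dominated_convergence
        (bound := fun x => B * (deriv F (2*v x) * v x + 2*α*v x))
      · filter_upwards [hIoc] with ε hε
        exact (((hwFm ε hε).sub hFvm).div_const ε).aestronglyMeasurable
      · filter_upwards [hIoc] with ε hε
        refine Filter.Eventually.of_forall (fun x => ?_)
        have h := hMVT (v x) (ε * η x) (hv0 x) (hsmall ε hε x)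
        have hS := hFpos2 (v x) (hv0 x)
        rw [Real.norm_eq_abs, abs_div, abs_of_pos hε.1, div_le_iff₀ hε.1]
        have h2 : |ε * η x| * (v x * (deriv F (2*v x) + 2*α))
            ≤ ε * B * (v x * (deriv F (2*v x) + 2*α)) := by
          apply mul_le_mul_of_nonneg_right _ hS
          rw [abs_mul, abs_of_pos hε.1]
          exact mul_le_mul_of_nonneg_left (hηB x) hε.1.le
        have e : B * (deriv F (2*v x) * v x + 2*α*v x) * ε
            = ε * B * (v x * (deriv F (2*v x) + 2*α)) := by ring
        rw [e]
        linarith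
      · exact (hInt2.add (hvI.const_mul (2*α))).const_mul B
      · refine Filter.Eventually.of_forall (fun x => ?_)
        by_cases hvx : v x = 0
        · have e : (fun ε : ℝ => (F ((1 + ε * η x) * v x) - F (v x))/ε) = fun _ => 0 := by
            funext ε; rw [hvx, mul_zero, sub_self, zero_div]
          rw [e, hvx]
          simpa using tendsto_const_nhds
        · have hs : 0 < v x := lt_of_le_of_ne (hv0 x) (Ne.symm hvx)
          have hgd : HasDerivAt (fun t : ℝ => (1 + t * η x) * v x) (η x * v x) 0 := by
            simpa using (((hasDerivAt_id (0:ℝ)).mul_const (η x)).const_add 1).mul_const (v x)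
          have h1 : HasDerivAt F (deriv F (v x)) ((1 + (0:ℝ) * η x) * v x) := by
            rw [show (1 + (0:ℝ) * η x) * v x = v x by ring]; exact hFd (v x) hs
          have hcomp : HasDerivAt (fun t : ℝ => F ((1 + t * η x) * v x))
              (deriv F (v x) * (η x * v x)) 0 := h1.comp 0 hgd
          have hts := hasDerivAt_iff_tendsto_slope.1 hcomp
          have hmono : (nhdsWithin (0:ℝ) (Ioi 0)) ≤ nhdsWithin (0:ℝ) {(0:ℝ)}ᶜ :=
            nhdsWithin_mono 0 (fun y hy => ne_of_gt hy)
          have hts2 := hts.mono_left hmono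
          have heq : ∀ ε : ℝ, slope (fun t : ℝ => F ((1 + t * η x) * v x)) 0 ε
              = (F ((1 + ε * η x) * v x) - F (v x))/ε := by
            intro ε
            rw [slope_def_field, show (1 + (0:ℝ) * η x) * v x = v x by ring, sub_zero]
          rw [show deriv F (v x) * v x * η x = deriv F (v x) * (η x * v x) by ring]
          exact hts2.congr heq
    -- pointwise identity for the Fisher-Rao quotient
    have hid : ∀ ε ∈ Ioc (0:ℝ) ε₀, ∀ x,
        ((Real.sqrt ((1 + ε * η x) * v x) - Real.sqrt (u x))^2
          - (Real.sqrt (v x) - Real.sqrt (u x))^2)/ε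
        = η x * v x - 2*(Real.sqrt (u x) * Real.sqrt (v x))
            * ((Real.sqrt (1 + ε * η x) - 1)/ε) := by
      intro ε hε x
      have h1 : (0:ℝ) ≤ 1 + ε * η x := by linarith [(hfac ε hε x).1]
      have hε' : ε ≠ 0 := ne_of_gt hε.1
      rw [Real.sqrt_mul h1]
      rw [sub_sq, sub_sq, mul_pow, Real.sq_sqrt h1, Real.sq_sqrt (hv0 x),
        Real.sq_sqrt (hu0 x)]
      field_simp
      ring
    have hquot : ∀ ε ∈ Ioc (0:ℝ) ε₀, ∀ x,
        |(Real.sqrt (1 + ε * η x) - 1)/ε| ≤ |η x| := by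
      intro ε hε x
      have h1 : -(1/2) ≤ ε * η x := by linarith [(abs_le.1 (hsmall ε hε x)).1]
      have h2 := hsqrtlip (ε * η x) h1
      rw [abs_div, abs_of_pos hε.1, div_le_iff₀ hε.1]
      rw [abs_mul, abs_of_pos hε.1] at h2
      linarith
    have hsb : ∀ x, 2*(Real.sqrt (u x) * Real.sqrt (v x)) ≤ u x + v x := by
      intro x
      nlinarith [sq_nonneg (Real.sqrt (u x) - Real.sqrt (v x)),
        Real.sq_sqrt (hu0 x), Real.sq_sqrt (hv0 x)]
    -- T2 : limit of the Fisher-Rao difference quotient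
    have T2 : Tendsto (fun ε : ℝ => ∫ x in Ω,
          ((Real.sqrt ((1 + ε * η x) * v x) - Real.sqrt (u x))^2
            - (Real.sqrt (v x) - Real.sqrt (u x))^2)/ε)
        (nhdsWithin 0 (Ioi 0))
        (nhds (∫ x in Ω, (Real.sqrt (v x) - Real.sqrt (u x)) * Real.sqrt (v x) * η x)) := by
      apply tendsto_integral_filter_of_dominated_convergence
        (bound := fun x => B * (2 * v x + u x))
      · filter_upwards [hIoc] with ε hε
        apply Measurable.aestronglyMeasurable
        apply Measurable.div_const
        exact (((Real.continuous_sqrt.measurable.comp (hwm ε)).sub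
            (Real.continuous_sqrt.measurable.comp hum)).pow measurable_const).sub
          (((Real.continuous_sqrt.measurable.comp hvm).sub
            (Real.continuous_sqrt.measurable.comp hum)).pow measurable_const)
      · filter_upwards [hIoc] with ε hε
        refine Filter.Eventually.of_forall (fun x => ?_)
        rw [Real.norm_eq_abs, hid ε hε x]
        have h2 := hquot ε hε x
        have h3 := hsb x
        have h4 : 0 ≤ Real.sqrt (u x) * Real.sqrt (v x) :=
          mul_nonneg (Real.sqrt_nonneg _) (Real.sqrt_nonneg _)
        calc |η x * v x - 2*(Real.sqrt (u x) * Real.sqrt (v x))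
                * ((Real.sqrt (1 + ε * η x) - 1)/ε)|
            ≤ |η x * v x| + |2*(Real.sqrt (u x) * Real.sqrt (v x))
                * ((Real.sqrt (1 + ε * η x) - 1)/ε)| := abs_sub _ _
          _ ≤ B * v x + (u x + v x) * |η x| := by
              rw [abs_mul, abs_of_nonneg (hv0 x), abs_mul,
                abs_of_nonneg (by positivity : (0:ℝ) ≤ 2*(Real.sqrt (u x) * Real.sqrt (v x)))]
              have e1 : |η x| * v x ≤ B * v x :=
                mul_le_mul_of_nonneg_right (hηB x) (hv0 x)
              have e2 : 2*(Real.sqrt (u x) * Real.sqrt (v x)) * |(Real.sqrt (1 + ε * η x) - 1)/ε|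
                  ≤ (u x + v x) * |η x| := by
                calc 2*(Real.sqrt (u x) * Real.sqrt (v x)) * |(Real.sqrt (1 + ε * η x) - 1)/ε|
                    ≤ 2*(Real.sqrt (u x) * Real.sqrt (v x)) * |η x| :=
                      mul_le_mul_of_nonneg_left h2 (by positivity)
                  _ ≤ (u x + v x) * |η x| :=
                      mul_le_mul_of_nonneg_right h3 (abs_nonneg _)
              linarith
          _ ≤ B * (2 * v x + u x) := by
              have := hηB x; have := abs_nonneg (η x)
              nlinarith [hv0 x, hu0 x]
      · exact ((hvI.const_mul 2).add huI).const_mul B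
      · refine Filter.Eventually.of_forall (fun x => ?_)
        have hg : HasDerivAt (fun t : ℝ => 1 + t * η x) (η x) 0 := by
          simpa using ((hasDerivAt_id (0:ℝ)).mul_const (η x)).const_add 1
        have h1 : HasDerivAt Real.sqrt (1/(2*Real.sqrt 1)) ((1:ℝ) + 0 * η x) := by
          rw [show (1:ℝ) + 0 * η x = 1 by ring]
          exact Real.hasDerivAt_sqrt one_ne_zero
        have hsd : HasDerivAt (fun t : ℝ => Real.sqrt (1 + t * η x)) (η x / 2) 0 := by
          have h2 := h1.comp 0 hg
          exact h2.congr_deriv (by rw [Real.sqrt_one]; ring)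
        have hts := hasDerivAt_iff_tendsto_slope.1 hsd
        have hmono : (nhdsWithin (0:ℝ) (Ioi 0)) ≤ nhdsWithin (0:ℝ) {(0:ℝ)}ᶜ :=
          nhdsWithin_mono 0 (fun y hy => ne_of_gt hy)
        have hts2 := hts.mono_left hmono
        have heq : ∀ ε : ℝ, slope (fun t : ℝ => Real.sqrt (1 + t * η x)) 0 ε
            = (Real.sqrt (1 + ε * η x) - 1)/ε := by
          intro ε
          rw [slope_def_field, show (1:ℝ) + 0 * η x = 1 by ring, Real.sqrt_one, sub_zero]
        have hq : Tendsto (fun ε : ℝ => (Real.sqrt (1 + ε * η x) - 1)/ε)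
            (nhdsWithin 0 (Ioi 0)) (nhds (η x / 2)) := hts2.congr heq
        have hmain : Tendsto (fun ε : ℝ => η x * v x
            - 2*(Real.sqrt (u x) * Real.sqrt (v x)) * ((Real.sqrt (1 + ε * η x) - 1)/ε))
            (nhdsWithin 0 (Ioi 0))
            (nhds (η x * v x - 2*(Real.sqrt (u x) * Real.sqrt (v x)) * (η x / 2))) :=
          tendsto_const_nhds.sub (hq.const_mul _)
        have hval : (Real.sqrt (v x) - Real.sqrt (u x)) * Real.sqrt (v x) * η x
            = η x * v x - 2*(Real.sqrt (u x) * Real.sqrt (v x)) * (η x / 2) := by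
          have h5 := Real.mul_self_sqrt (hv0 x)
          linear_combination (η x) * h5
        rw [hval]
        apply Tendsto.congr' _ hmain
        filter_upwards [hIoc] with ε hε
        rw [hid ε hε x]
    -- combine
    have T := T1.add (T2.const_mul (2/τ))
    have : 0 ≤ (∫ x in Ω, deriv F (v x) * v x * η x)
        + (2/τ) * ∫ x in Ω, (Real.sqrt (v x) - Real.sqrt (u x)) * Real.sqrt (v x) * η x := by
      apply ge_of_tendsto T
      filter_upwards [hIoc] with ε hε
      exact hQpos ε hε
    exact this
  -- conclude
  have h1 := key ψ hψm hψB
  have h2 := key (fun x => -ψ x) hψm.neg (fun x => by simpa using hψB x)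
  have e1 : (∫ x in Ω, deriv F (v x) * v x * (-ψ x))
      = -∫ x in Ω, deriv F (v x) * v x * ψ x := by
    rw [← integral_neg]; congr 1; funext x; ring
  have e2 : (∫ x in Ω, (Real.sqrt (v x) - Real.sqrt (u x)) * Real.sqrt (v x) * (-ψ x))
      = -∫ x in Ω, (Real.sqrt (v x) - Real.sqrt (u x)) * Real.sqrt (v x) * ψ x := by
    rw [← integral_neg]; congr 1; funext x; ring
  rw [e1, e2] at h2
  have hτ' : τ ≠ 0 := ne_of_gt hτ
  have h3 : (∫ x in Ω, deriv F (v x) * v x * ψ x)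
      + (2/τ) * ∫ x in Ω, (Real.sqrt (v x) - Real.sqrt (u x)) * Real.sqrt (v x) * ψ x = 0 := by
    linarith
  have key2 : ∀ A C : ℝ, A + (2/τ) * C = 0 → C = -(τ/2) * A := by
    intro A C h
    have hh : (τ/2) * (2/τ) = 1 := by field_simp
    calc C = (τ/2) * ((2/τ) * C) := by rw [← mul_assoc, hh, one_mul]
      _ = -(τ/2) * A := by rw [show (2/τ) * C = -A by linarith]; ring
  exact key2 _ _ h3
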